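/- Let (Ω, 𝓕, P) be a probability space, u ∈ ℝ, r a positive integer, and X_1, …, X_r real-valued random variables such that the exceedance probabilities of triples are shift-invariant: for all integers i ≥ 1 and 0 ≤ j ≤ k with i + k ≤ r one has P(X_i > u, X_{i+j} > u, X_{i+k} > u) = P(X_1 > u, X_{1+j} > u, X_{1+k} > u). Then E[(∑_{i=1}^r 1{X_i > u})³] ≤ r · P(X_1 > u) + 6 · ∑_{k=1}^{r−1} ∑_{j=1}^{k} (r − k) · P(X_1 > u, X_{1+j} > u, X_{1+k} > u). -/

import Mathlib

open MeasureTheory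
open scoped ENNReal

/-- The counting inequality underlying Lemma C.1: the third moment of the number of
exceedances over a threshold `u` of random variables whose triple exceedance
probabilities are shift-invariant. -/
lemma my_sq_id (f : ℕ → ℝ≥0∞) (hf : ∀ i, f i * f i = f i) (r : ℕ) :
    (∑ i ∈ Finset.Icc 1 r, f i) ^ 2
      = ∑ i ∈ Finset.Icc 1 r, f i
        + 2 * ∑ a ∈ Finset.Icc 1 r, ∑ b ∈ Finset.Icc (a+1) r, f a * f b := by
  induction r with
  | zero => simp
  | succ r ih =>
    have h1 : (1:ℕ) ≤ r + 1 := by omega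
    rw [Finset.sum_Icc_succ_top h1]
    have hsplit : ∑ a ∈ Finset.Icc 1 (r+1), ∑ b ∈ Finset.Icc (a+1) (r+1), f a * f b
        = (∑ a ∈ Finset.Icc 1 r, ∑ b ∈ Finset.Icc (a+1) r, f a * f b)
          + (∑ a ∈ Finset.Icc 1 r, f a) * f (r+1) := by
      rw [Finset.sum_Icc_succ_top h1]
      have : ∀ a ∈ Finset.Icc 1 r, ∑ b ∈ Finset.Icc (a+1) (r+1), f a * f b
          = (∑ b ∈ Finset.Icc (a+1) r, f a * f b) + f a * f (r+1) := by
        intro a ha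
        simp only [Finset.mem_Icc] at ha
        rw [Finset.sum_Icc_succ_top (by omega : a + 1 ≤ r + 1)]
      rw [Finset.sum_congr rfl this, Finset.sum_add_distrib, Finset.sum_mul]
      have : Finset.Icc (r+1+1) (r+1) = ∅ := Finset.Icc_eq_empty (by omega)
      rw [this]
      simp [add_assoc]
    rw [hsplit]
    have hx : f (r+1) * f (r+1) = f (r+1) := hf _
    calc (∑ i ∈ Finset.Icc 1 r, f i + f (r+1)) ^ 2
        = (∑ i ∈ Finset.Icc 1 r, f i)^2 + 2 * ((∑ i ∈ Finset.Icc 1 r, f i) * f (r+1))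
            + f (r+1) * f (r+1) := by ring
      _ = (∑ i ∈ Finset.Icc 1 r, f i
            + 2 * ∑ a ∈ Finset.Icc 1 r, ∑ b ∈ Finset.Icc (a+1) r, f a * f b)
          + 2 * ((∑ i ∈ Finset.Icc 1 r, f i) * f (r+1)) + f (r+1) := by rw [ih, hx]
      _ = _ := by ring

lemma my_cube_id (f : ℕ → ℝ≥0∞) (hf : ∀ i, f i * f i = f i) (r : ℕ) :
    (∑ i ∈ Finset.Icc 1 r, f i) ^ 3
      = ∑ i ∈ Finset.Icc 1 r, f i
        + 6 * ∑ a ∈ Finset.Icc 1 r, ∑ c ∈ Finset.Icc (a+1) r, ∑ b ∈ Finset.Icc (a+1) c,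
            f a * f b * f c := by
  induction r with
  | zero => simp
  | succ r ih =>
    have h1 : (1:ℕ) ≤ r + 1 := by omega
    rw [Finset.sum_Icc_succ_top h1]
    have hsplit : ∑ a ∈ Finset.Icc 1 (r+1), ∑ c ∈ Finset.Icc (a+1) (r+1),
          ∑ b ∈ Finset.Icc (a+1) c, f a * f b * f c
        = (∑ a ∈ Finset.Icc 1 r, ∑ c ∈ Finset.Icc (a+1) r, ∑ b ∈ Finset.Icc (a+1) c,
            f a * f b * f c)
          + ((∑ a ∈ Finset.Icc 1 r, ∑ b ∈ Finset.Icc (a+1) r, f a * f b) * f (r+1)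
             + (∑ a ∈ Finset.Icc 1 r, f a) * f (r+1)) := by
      rw [Finset.sum_Icc_succ_top h1]
      have : ∀ a ∈ Finset.Icc 1 r,
          ∑ c ∈ Finset.Icc (a+1) (r+1), ∑ b ∈ Finset.Icc (a+1) c, f a * f b * f c
          = (∑ c ∈ Finset.Icc (a+1) r, ∑ b ∈ Finset.Icc (a+1) c, f a * f b * f c)
            + ((∑ b ∈ Finset.Icc (a+1) r, f a * f b * f (r+1)) + f a * f (r+1)) := by
        intro a ha
        simp only [Finset.mem_Icc] at ha
        rw [Finset.sum_Icc_succ_top (by omega : a + 1 ≤ r + 1)]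
        congr 1
        rw [Finset.sum_Icc_succ_top (by omega : a + 1 ≤ r + 1)]
        congr 1
        rw [mul_assoc, hf]
      rw [Finset.sum_congr rfl this, Finset.sum_add_distrib, Finset.sum_add_distrib]
      have he : Finset.Icc (r+1+1) (r+1) = ∅ := Finset.Icc_eq_empty (by omega)
      rw [he]
      simp only [Finset.sum_empty, add_zero]
      congr 1
      congr 1
      · rw [Finset.sum_mul]
        exact Finset.sum_congr rfl fun a _ => by rw [Finset.sum_mul]
      · rw [Finset.sum_mul]
    rw [hsplit]
    have hx : f (r+1) * f (r+1) = f (r+1) := hf _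
    have hsq := my_sq_id f hf r
    set A := ∑ i ∈ Finset.Icc 1 r, f i with hA
    set B := ∑ a ∈ Finset.Icc 1 r, ∑ b ∈ Finset.Icc (a+1) r, f a * f b with hB
    set T := ∑ a ∈ Finset.Icc 1 r, ∑ c ∈ Finset.Icc (a+1) r, ∑ b ∈ Finset.Icc (a+1) c,
        f a * f b * f c with hT
    set x := f (r+1) with hxx
    calc (A + x)^3 = A^3 + 3*(A^2*x) + 3*(A*(x*x)) + (x*x)*x := by ring
      _ = (A + 6*T) + 3*((A + 2*B)*x) + 3*(A*x) + x := by rw [hx, hx, hsq, ih]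
      _ = (A + x) + 6*(T + (B*x + A*x)) := by ring

lemma my_shift_sum {M : Type*} [AddCommMonoid M] (g : ℕ → M) (a c : ℕ) :
    ∑ b ∈ Finset.Icc (a+1) c, g (b - a) = ∑ j ∈ Finset.Icc 1 (c - a), g j := by
  refine Finset.sum_bij' (fun b _ => b - a) (fun j _ => j + a) ?_ ?_ ?_ ?_ ?_
  · intro b hb; simp only [Finset.mem_Icc] at hb ⊢; omega
  · intro j hj; simp only [Finset.mem_Icc] at hj ⊢; omega
  · intro b hb; simp only [Finset.mem_Icc] at hb; omega
  · intro j hj; simp only [Finset.mem_Icc] at hj; omega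
  · intro b hb; rfl

lemma my_lint_le {Ω ι : Type*} [MeasurableSpace Ω] (P : MeasureTheory.Measure Ω)
    (s : Finset ι) (S : ι → Set Ω) (c : ι → ℝ≥0∞) (g : ι → Ω → ℝ≥0∞)
    (hg : ∀ i ω, g i ω = Set.indicator (S i) (fun _ => c i) ω) :
    ∫⁻ ω, ∑ i ∈ s, g i ω ∂P ≤ ∑ i ∈ s, c i * P (S i) := by
  calc ∫⁻ ω, ∑ i ∈ s, g i ω ∂P
      ≤ ∫⁻ ω, ∑ i ∈ s, (toMeasurable P (S i)).indicator (fun _ => c i) ω ∂P := by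
        refine lintegral_mono fun ω => Finset.sum_le_sum fun i _ => ?_
        rw [hg]
        exact Set.indicator_le_indicator_of_subset (subset_toMeasurable P (S i))
          (fun _ => zero_le) ω
    _ = ∑ i ∈ s, ∫⁻ ω, (toMeasurable P (S i)).indicator (fun _ => c i) ω ∂P :=
        lintegral_finset_sum _ fun i _ =>
          measurable_const.indicator (measurableSet_toMeasurable P (S i))
    _ = ∑ i ∈ s, c i * P (S i) := by
        refine Finset.sum_congr rfl fun i _ => ?_
        rw [lintegral_indicator_const (measurableSet_toMeasurable P (S i)),
          measure_toMeasurable]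

lemma my_main_le {Ω : Type*} [MeasurableSpace Ω] (P : MeasureTheory.Measure Ω)
    (u : ℝ) (r : ℕ) (X : ℕ → Ω → ℝ) :
    ∫⁻ ω, (∑ i ∈ Finset.Icc 1 r, if X i ω > u then (1 : ℝ≥0∞) else 0) ^ 3 ∂P
      ≤ ∑ i ∈ Finset.Icc 1 r, P {ω | X i ω > u}
        + ∑ a ∈ Finset.Icc 1 r, ∑ c ∈ Finset.Icc (a+1) r, ∑ b ∈ Finset.Icc (a+1) c,
            6 * P {ω | X a ω > u ∧ X b ω > u ∧ X c ω > u} := by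
  classical
  set sig : Finset ((_ : ℕ) × (_ : ℕ) × ℕ) :=
    (Finset.Icc 1 r).sigma (fun a => (Finset.Icc (a+1) r).sigma fun c => Finset.Icc (a+1) c)
    with hsigdef
  set S : ℕ ⊕ ((_ : ℕ) × (_ : ℕ) × ℕ) → Set Ω :=
    Sum.elim (fun i => {ω | X i ω > u})
      (fun p => {ω | X p.1 ω > u ∧ X p.2.2 ω > u ∧ X p.2.1 ω > u}) with hSdef
  set cc : ℕ ⊕ ((_ : ℕ) × (_ : ℕ) × ℕ) → ℝ≥0∞ :=
    Sum.elim (fun _ => 1) (fun _ => 6) with hccdef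
  set g : ℕ ⊕ ((_ : ℕ) × (_ : ℕ) × ℕ) → Ω → ℝ≥0∞ :=
    Sum.elim (fun i ω => if X i ω > u then (1:ℝ≥0∞) else 0)
      (fun p ω => 6 * ((if X p.1 ω > u then (1:ℝ≥0∞) else 0)
        * (if X p.2.2 ω > u then (1:ℝ≥0∞) else 0)
        * (if X p.2.1 ω > u then (1:ℝ≥0∞) else 0))) with hgdef
  have hg : ∀ i ω, g i ω = Set.indicator (S i) (fun _ => cc i) ω := by
    rintro (i | ⟨a, c, b⟩) ω
    · by_cases h : X i ω > u <;>
        simp [hgdef, hSdef, hccdef, Set.indicator, h]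
    · by_cases ha : X a ω > u <;> by_cases hb' : X b ω > u <;> by_cases hc : X c ω > u <;>
        simp [hgdef, hSdef, hccdef, Set.indicator, ha, hb', hc]
  have hsig : ∀ (F : ((_ : ℕ) × (_ : ℕ) × ℕ) → ℝ≥0∞),
      ∑ p ∈ sig, F p
        = ∑ a ∈ Finset.Icc 1 r, ∑ c ∈ Finset.Icc (a+1) r, ∑ b ∈ Finset.Icc (a+1) c,
            F ⟨a, c, b⟩ := by
    intro F
    rw [hsigdef, Finset.sum_sigma]
    exact Finset.sum_congr rfl fun a _ => by rw [Finset.sum_sigma]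
  have hpt : ∀ ω, (∑ i ∈ Finset.Icc 1 r, if X i ω > u then (1 : ℝ≥0∞) else 0) ^ 3
      = ∑ i ∈ (Finset.Icc 1 r).disjSum sig, g i ω := by
    intro ω
    rw [Finset.sum_disjSum]
    rw [my_cube_id (fun i => if X i ω > u then (1:ℝ≥0∞) else 0)
      (fun i => by by_cases h : X i ω > u <;> simp [h]) r]
    congr 1
    rw [hsig (fun p => g (Sum.inr p) ω)]
    simp only [Finset.mul_sum]
    rfl
  calc ∫⁻ ω, (∑ i ∈ Finset.Icc 1 r, if X i ω > u then (1 : ℝ≥0∞) else 0) ^ 3 ∂P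
      = ∫⁻ ω, ∑ i ∈ (Finset.Icc 1 r).disjSum sig, g i ω ∂P := lintegral_congr hpt
    _ ≤ ∑ i ∈ (Finset.Icc 1 r).disjSum sig, cc i * P (S i) := my_lint_le P _ S cc g hg
    _ = (∑ i ∈ Finset.Icc 1 r, cc (Sum.inl i) * P (S (Sum.inl i)))
        + ∑ p ∈ sig, cc (Sum.inr p) * P (S (Sum.inr p)) := Finset.sum_disjSum _ _ _
    _ = ∑ i ∈ Finset.Icc 1 r, P {ω | X i ω > u}
        + ∑ a ∈ Finset.Icc 1 r, ∑ c ∈ Finset.Icc (a+1) r, ∑ b ∈ Finset.Icc (a+1) c,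
            6 * P {ω | X a ω > u ∧ X b ω > u ∧ X c ω > u} := by
      congr 1
      · exact Finset.sum_congr rfl fun i _ => by simp [hccdef, hSdef]
      · rw [hsig (fun p => cc (Sum.inr p) * P (S (Sum.inr p)))]
        rfl

theorem stmt0 {Ω : Type*} [MeasurableSpace Ω] (P : Measure Ω) [IsProbabilityMeasure P]
    (u : ℝ) (r : ℕ) (hr : 0 < r) (X : ℕ → Ω → ℝ)
    (hshift : ∀ i j k : ℕ, 1 ≤ i → j ≤ k → i + k ≤ r →
      P {ω | X i ω > u ∧ X (i + j) ω > u ∧ X (i + k) ω > u}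
        = P {ω | X 1 ω > u ∧ X (1 + j) ω > u ∧ X (1 + k) ω > u}) :
    ∫⁻ ω, (∑ i ∈ Finset.Icc 1 r, if X i ω > u then (1 : ℝ≥0∞) else 0) ^ 3 ∂P
      ≤ (r : ℝ≥0∞) * P {ω | X 1 ω > u}
        + 6 * ∑ k ∈ Finset.Icc 1 (r - 1), ∑ j ∈ Finset.Icc 1 k,
            ((r : ℝ≥0∞) - (k : ℝ≥0∞)) *
              P {ω | X 1 ω > u ∧ X (1 + j) ω > u ∧ X (1 + k) ω > u} := by
  refine (my_main_le P u r X).trans_eq ?_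
  congr 1
  · -- singles
    have h1 : ∀ i ∈ Finset.Icc 1 r, P {ω | X i ω > u} = P {ω | X 1 ω > u} := by
      intro i hi
      simp only [Finset.mem_Icc] at hi
      have h := hshift i 0 0 hi.1 le_rfl (by omega)
      simpa using h
    rw [Finset.sum_congr rfl h1, Finset.sum_const, Nat.card_Icc]
    simp [nsmul_eq_mul]
  · -- triples
    have h2 : ∀ a ∈ Finset.Icc 1 r,
        (∑ c ∈ Finset.Icc (a+1) r, ∑ b ∈ Finset.Icc (a+1) c,
          6 * P {ω | X a ω > u ∧ X b ω > u ∧ X c ω > u})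
        = ∑ k ∈ Finset.Icc 1 (r - a), ∑ j ∈ Finset.Icc 1 k,
            6 * P {ω | X 1 ω > u ∧ X (1+j) ω > u ∧ X (1+k) ω > u} := by
      intro a ha
      simp only [Finset.mem_Icc] at ha
      rw [← my_shift_sum (fun k => ∑ j ∈ Finset.Icc 1 k,
          6 * P {ω | X 1 ω > u ∧ X (1+j) ω > u ∧ X (1+k) ω > u}) a r]
      refine Finset.sum_congr rfl fun c hc => ?_
      simp only [Finset.mem_Icc] at hc
      rw [← my_shift_sum (fun j =>
          6 * P {ω | X 1 ω > u ∧ X (1+j) ω > u ∧ X (1+(c-a)) ω > u}) a c]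
      refine Finset.sum_congr rfl fun b hb => ?_
      simp only [Finset.mem_Icc] at hb
      congr 1
      have h := hshift a (b-a) (c-a) ha.1 (by omega) (by omega)
      rw [Nat.add_sub_cancel' (by omega : a ≤ b), Nat.add_sub_cancel' (by omega : a ≤ c)] at h
      exact h
    rw [Finset.sum_congr rfl h2]
    rw [Finset.sum_comm' (s := Finset.Icc 1 r) (t := fun a => Finset.Icc 1 (r - a))
      (s' := fun k => Finset.Icc 1 (r - k)) (t' := Finset.Icc 1 (r - 1))
      (fun x y => by simp only [Finset.mem_Icc]; omega)]
    rw [Finset.mul_sum]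
    refine Finset.sum_congr rfl fun k hk => ?_
    simp only [Finset.mem_Icc] at hk
    rw [Finset.sum_const, Nat.card_Icc]
    have hcard : r - k + 1 - 1 = r - k := by omega
    rw [hcard, nsmul_eq_mul, ENNReal.natCast_sub r k, Finset.mul_sum, Finset.mul_sum]
    refine Finset.sum_congr rfl fun j _ => ?_
    ring
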